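/- arXiv:1405.2711 — 4 statements merged into one kernel-verified Lean document; each statement's English description precedes it below -/
import Mathlib

section
/- Let (G_i)_{i∈I} be a family of perfect groups and let c(G_i) denote the commutator width of G_i (the least n such that every element is a product of at most n commutators, or ∞). Then the product ∏_{i∈I} G_i is perfect if and only if the set I_∞ = {i : c(G_i) = ∞} is finite and the function i ↦ c(G_i) is bounded on I \ I_∞. -/
open scoped commutatorElement

/-- `g` is a product of (at most) `n` commutators. -/
def IsProdOfCommutators {G : Type*} [Group G] (g : G) (n : ℕ) : Prop :=
  ∃ a b : Fin n → G, g = (List.ofFn fun k => ⁅a k, b k⁆).prod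

/-- The commutator width of a group: the least `n : ℕ∞` such that every element is a product
of at most `n` commutators, and `⊤` (i.e. `∞`) if no such `n` exists. -/
noncomputable def commWidth (G : Type*) [Group G] : ℕ∞ :=
  sInf {N : ℕ∞ | ∃ n : ℕ, N = n ∧ ∀ g : G, IsProdOfCommutators g n}

section aux
variable {G : Type*} [Group G]

lemma isProd_succ {g : G} {n : ℕ} (h : IsProdOfCommutators g n) :
    IsProdOfCommutators g (n + 1) := by
  obtain ⟨a, b, rfl⟩ := h
  refine ⟨Fin.snoc a 1, Fin.snoc b 1, ?_⟩
  rw [List.ofFn_succ']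
  simp

lemma isProd_mono {g : G} {m n : ℕ} (h : m ≤ n) (hg : IsProdOfCommutators g m) :
    IsProdOfCommutators g n := by
  induction n, h using Nat.le_induction with
  | base => exact hg
  | succ n _ ih => exact isProd_succ ih

lemma mem_commutator_iff {g : G} :
    g ∈ commutator G ↔ ∃ n, IsProdOfCommutators g n := by
  constructor
  · intro hg
    rw [commutator_eq_closure] at hg
    have hset : commutatorSet G ∪ (commutatorSet G)⁻¹ = commutatorSet G := by
      ext x
      simp only [Set.mem_union, Set.mem_inv, mem_commutatorSet_iff, or_iff_left_iff_imp]
      rintro ⟨a, b, hab⟩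
      exact ⟨b, a, by rw [← commutatorElement_inv, hab, inv_inv]⟩
    have hg' : g ∈ Submonoid.closure (commutatorSet G) := by
      have := (Subgroup.closure_toSubmonoid (commutatorSet G))
      have h2 : g ∈ (Subgroup.closure (commutatorSet G)).toSubmonoid := hg
      rw [this, hset] at h2
      exact h2
    obtain ⟨l, hl, rfl⟩ := Submonoid.exists_list_of_mem_closure hg'
    choose a b hab using fun k : Fin l.length => hl (l.get k) (l.get_mem k)
    refine ⟨l.length, a, b, ?_⟩
    conv_lhs => rw [← List.ofFn_get l]
    exact congrArg (fun f => (List.ofFn f).prod) (funext fun k => (hab k).symm)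
  · rintro ⟨n, a, b, rfl⟩
    refine Subgroup.list_prod_mem _ fun x hx => ?_
    rw [List.mem_ofFn] at hx
    obtain ⟨k, rfl⟩ := hx
    rw [commutator_eq_closure]
    exact Subgroup.subset_closure (commutator_mem_commutatorSet _ _)

lemma commWidth_le_iff {n : ℕ} :
    commWidth G ≤ n ↔ ∀ g : G, IsProdOfCommutators g n := by
  constructor
  · intro h
    by_contra hc
    push_neg at hc
    have hlb : ((n : ℕ∞) + 1) ≤ commWidth G := by
      apply le_sInf
      rintro N ⟨m, rfl, hm⟩
      by_contra hN
      push_neg at hN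
      have hmn : m ≤ n := by
        have := hN.le
        exact_mod_cast Order.le_of_lt_add_one hN
      obtain ⟨g, hg⟩ := hc
      exact hg (isProd_mono hmn (hm g))
    have h2 : (n : ℕ∞) + 1 ≤ n := hlb.trans h
    have h3 : (n : ℕ∞) < n + 1 := by exact_mod_cast Nat.lt_succ_self n
    exact absurd h2 (not_le.mpr h3)
  · intro h
    exact sInf_le ⟨n, rfl, h⟩

lemma commWidth_eq_top_iff :
    commWidth G = ⊤ ↔ ∀ n : ℕ, ∃ g : G, ¬ IsProdOfCommutators g n := by
  constructor
  · intro h n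
    by_contra hc
    push_neg at hc
    have := commWidth_le_iff.mpr hc
    rw [h] at this
    simp at this
  · intro h
    by_contra hc
    obtain ⟨n, hn⟩ := WithTop.ne_top_iff_exists.mp hc
    obtain ⟨g, hg⟩ := h n
    exact hg (commWidth_le_iff.mp hn.ge g)

end aux

lemma list_prod_apply' {I : Type*} {G : I → Type*} [∀ i, Monoid (G i)]
    (l : List (∀ i, G i)) (i : I) : l.prod i = (l.map fun f => f i).prod := by
  induction l with
  | nil => rfl
  | cons hd tl ih => simp [ih]

lemma isProd_pi {I : Type*} {G : I → Type*} [∀ i, Group (G i)] {g : ∀ i, G i} {n : ℕ}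
    (h : ∀ i, IsProdOfCommutators (g i) n) : IsProdOfCommutators g n := by
  choose a b hab using h
  refine ⟨fun k i => a i k, fun k i => b i k, funext fun i => ?_⟩
  rw [list_prod_apply', List.map_ofFn]
  exact hab i

lemma isProd_pi' {I : Type*} {G : I → Type*} [∀ i, Group (G i)] {g : ∀ i, G i} {n : ℕ}
    (h : IsProdOfCommutators g n) (i : I) : IsProdOfCommutators (g i) n := by
  obtain ⟨a, b, rfl⟩ := h
  exact ⟨fun k => a k i, fun k => b k i, by rw [list_prod_apply', List.map_ofFn]; rfl⟩

/-- Let `(G i)_{i ∈ I}` be a family of perfect groups. The product `∏ i, G i` is perfect if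
and only if the set of indices with infinite commutator width is finite and the commutator
width is bounded on its complement. -/
theorem pi_perfect_iff_commWidth_bounded
    {I : Type*} (G : I → Type*) [∀ i, Group (G i)]
    (hperf : ∀ i, commutator (G i) = ⊤) :
    commutator (∀ i, G i) = ⊤ ↔
      ({i : I | commWidth (G i) = ⊤}.Finite ∧
        ∃ C : ℕ, ∀ i : I, commWidth (G i) ≠ ⊤ → commWidth (G i) ≤ C) := by
  constructor
  · intro htop
    by_contra hc
    rw [not_and_or] at hc
    -- In either failure case, construct g with components that are not products of few commutators.
    have key : ∃ g : ∀ i, G i, ∀ N : ℕ, ∃ i, ¬ IsProdOfCommutators (g i) N := by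
      rcases hc with hinf | hub
      · -- infinitely many indices of infinite width
        replace hinf : {i : I | commWidth (G i) = ⊤}.Infinite := hinf
        obtain ⟨emb⟩ : Nonempty (ℕ ↪ {i : I | commWidth (G i) = ⊤}) :=
          ⟨Set.Infinite.natEmbedding _ hinf⟩
        set e : ℕ → I := fun n => (emb n : I) with he
        have hemem : ∀ n, commWidth (G (e n)) = ⊤ := fun n => (emb n).2
        have hinj : Function.Injective e :=
          fun m n h => by simpa using emb.injective (Subtype.ext h)
        classical
        set nn : ∀ i : I, ℕ := fun i =>
          if h : ∃ n, e n = i then h.choose else 0 with hnn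
        have hnn' : ∀ n, nn (e n) = n := by
          intro n
          have h : ∃ m, e m = e n := ⟨n, rfl⟩
          simp only [hnn, dif_pos h]
          exact hinj h.choose_spec
        refine ⟨fun i => if h : ∃ x : G i, ¬ IsProdOfCommutators x (nn i) then h.choose else 1,
            fun N => ⟨e N, ?_⟩⟩
        simp only [hnn']
        have hex : ∃ x : G (e N), ¬ IsProdOfCommutators x N :=
          commWidth_eq_top_iff.mp (hemem N) N
        simp only [dif_pos hex]
        exact hex.choose_spec
      · -- widths unbounded
        push_neg at hub
        classical
        refine ⟨fun i => if h : ∃ x : G i,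
            ¬ IsProdOfCommutators x ((commWidth (G i)).toNat - 1) then h.choose else 1,
            fun N => ?_⟩
        obtain ⟨i, hne, hgt⟩ := hub (N + 1)
        have hcoe : ((commWidth (G i)).toNat : ℕ∞) = commWidth (G i) := ENat.coe_toNat hne
        set m : ℕ := (commWidth (G i)).toNat with hm
        have hmN : N + 1 < m := by
          rw [← hcoe] at hgt
          exact_mod_cast hgt
        have hex : ∃ x : G i, ¬ IsProdOfCommutators x (m - 1) := by
          by_contra hall
          push_neg at hall
          have h1 : commWidth (G i) ≤ (m - 1 : ℕ) := commWidth_le_iff.mpr hall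
          rw [← hcoe] at h1
          have : m ≤ m - 1 := by exact_mod_cast h1
          omega
        refine ⟨i, ?_⟩
        simp only [dif_pos hex]
        intro hNp
        exact hex.choose_spec (isProd_mono (by omega : N ≤ m - 1) (by rwa [dif_pos (show ∃ x : G i, ¬ IsProdOfCommutators x ((commWidth (G i)).toNat - 1) from hex)] at hNp))
    obtain ⟨g, hg⟩ := key
    have hgmem : g ∈ commutator (∀ i, G i) := htop ▸ Subgroup.mem_top g
    obtain ⟨N, hN⟩ := mem_commutator_iff.mp hgmem
    obtain ⟨i, hi⟩ := hg N
    exact hi (isProd_pi' hN i)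
  · rintro ⟨hfin, C, hC⟩
    classical
    rw [Subgroup.eq_top_iff']
    intro g
    rw [mem_commutator_iff]
    have hmem : ∀ i, ∃ n, IsProdOfCommutators (g i) n := fun i =>
      mem_commutator_iff.mp ((hperf i) ▸ Subgroup.mem_top (g i))
    choose m hm using hmem
    set N : ℕ := C + hfin.toFinset.sup m with hN
    refine ⟨N, isProd_pi fun i => ?_⟩
    by_cases hi : commWidth (G i) = ⊤
    · have : m i ≤ N := le_add_of_le_right
        (Finset.le_sup (hfin.mem_toFinset.mpr hi))
      exact isProd_mono this (hm i)
    · have : IsProdOfCommutators (g i) C := commWidth_le_iff.mp (hC i hi) (g i)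
      exact isProd_mono (Nat.le_add_right C _) this
end

section
/- Let (G_i)_{i∈I} be a family of groups, X a compact topological space, ι : I → X any map, and N a normal subgroup of ∏_{i∈I} G_i. Suppose that for every p ∈ X, N surjects onto the stalk at p of the direct image presheaf of the product presheaf along ι. Then N contains the commutator subgroup of ∏_{i∈I} G_i. -/
open scoped commutatorElement

/-- Let `(G i)_{i ∈ I}` be a family of groups, `X` a compact space, `ι : I → X` any map, and
`N` a normal subgroup of `∏ i, G i`. If for every `p ∈ X` the subgroup `N` surjects onto the
stalk at `p` of the direct image presheaf (i.e. every `g` agrees with some element of `N` on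
`ι⁻¹(U)` for some open neighborhood `U` of `p`), then `N` contains the commutator subgroup
of `∏ i, G i`. -/
theorem commutator_le_of_surjective_on_stalks
    {I : Type*} (G : I → Type*) [∀ i, Group (G i)]
    {X : Type*} [TopologicalSpace X] [CompactSpace X] (ι : I → X)
    (N : Subgroup (∀ i, G i)) (hnorm : N.Normal)
    (hstalk : ∀ p : X, ∀ g : ∀ i, G i, ∃ n ∈ N, ∃ U : Set X,
      IsOpen U ∧ p ∈ U ∧ ∀ i : I, ι i ∈ U → n i = g i) :
    commutator (∀ i, G i) ≤ N := by
  classical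
  rw [commutator_def, Subgroup.commutator_le]
  intro a _ b _
  choose n hn U hUopen hpU hagree using hstalk
  obtain ⟨t, ht⟩ := isCompact_univ.elim_finite_subcover (fun p => U p a)
    (fun p => hUopen p a) (fun x _ => Set.mem_iUnion.2 ⟨x, hpU x a⟩)
  have key : ∀ s : Finset X, ∀ c : ∀ i, G i,
      (∀ i, ι i ∉ ⋃ p ∈ s, U p a → c i = 1) → ⁅a, c⁆ ∈ N := by
    intro s
    induction s using Finset.induction_on with
    | empty =>
      intro c hc
      have : c = 1 := funext fun i => hc i (by simp)
      simp only [this, commutatorElement_one_right]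
      exact N.one_mem
    | insert p s hps ih =>
      intro c hc
      set c₁ : ∀ i, G i := fun i => if ι i ∈ U p a then c i else 1 with hc₁
      set c₂ : ∀ i, G i := fun i => if ι i ∈ U p a then 1 else c i with hc₂
      have hsplit : c = c₁ * c₂ := by
        funext i
        by_cases h : ι i ∈ U p a <;> simp [hc₁, hc₂, h]
      have h1 : ⁅a, c₁⁆ ∈ N := by
        have heq : ⁅a, c₁⁆ = ⁅n p a, c₁⁆ := by
          funext i
          by_cases h : ι i ∈ U p a
          · simp only [commutatorElement_def, Pi.mul_apply, Pi.inv_apply, hagree p a i h]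
          · simp only [commutatorElement_def, Pi.mul_apply, Pi.inv_apply, hc₁, if_neg h]
            group
        rw [heq]
        have : ⁅n p a, c₁⁆ = n p a * (c₁ * (n p a)⁻¹ * c₁⁻¹) := by group
        rw [this]
        exact N.mul_mem (hn p a) (hnorm.conj_mem _ (N.inv_mem (hn p a)) c₁)
      have h2 : ⁅a, c₂⁆ ∈ N := by
        apply ih c₂
        intro i hi
        by_cases h : ι i ∈ U p a
        · simp [hc₂, h]
        · have : ι i ∉ ⋃ q ∈ insert p s, U q a := by
            simp only [Set.mem_iUnion] at hi ⊢
            rintro ⟨q, hq, hmem⟩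
            rcases Finset.mem_insert.1 hq with rfl | hq'
            · exact h hmem
            · exact hi ⟨q, hq', hmem⟩
          simp [hc₂, h, hc i this]
      have heq2 : ⁅a, c⁆ = ⁅a, c₁⁆ * (c₁ * ⁅a, c₂⁆ * c₁⁻¹) := by
        rw [hsplit]; group
      rw [heq2]
      exact N.mul_mem h1 (hnorm.conj_mem _ h2 c₁)
  exact key t b fun i hi => absurd (ht (Set.mem_univ (ι i))) hi
end

section
/- Let (G_i)_{i∈I} be a family of groups such that ∏_{i∈I} G_i is perfect, and let N be a proper normal subgroup of the product. Then either there exists j ∈ I such that the projection of N to G_j is proper, or there exists a free (non-principal) ultrafilter μ on I such that the image of N in the ultraproduct ∏_{i∈I} G_i / μ is a proper subgroup. -/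
/-- The normal subgroup of `∏ i, G i` of elements equal to `1` on a set belonging to the
ultrafilter `μ`; the quotient by this subgroup is the ultraproduct `∏ i, G i / μ`. -/
def ultrafilterKer {I : Type*} (G : I → Type*) [∀ i, Group (G i)] (μ : Ultrafilter I) :
    Subgroup (∀ i, G i) where
  carrier := {g | ∀ᶠ i in (μ : Filter I), g i = 1}
  one_mem' := Filter.Eventually.of_forall fun _ => rfl
  mul_mem' := fun hg hh => by
    filter_upwards [hg, hh] with i h1 h2
    simp [h1, h2]
  inv_mem' := fun hg => by
    filter_upwards [hg] with i h1
    simp [h1]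

instance ultrafilterKer_normal {I : Type*} (G : I → Type*) [∀ i, Group (G i)]
    (μ : Ultrafilter I) : (ultrafilterKer G μ).Normal where
  conj_mem n hn g := by
    filter_upwards [hn] with i h1
    simp [Pi.mul_apply, h1]

open scoped commutatorElement

/-- Let `(G i)_{i ∈ I}` be a family of groups with `∏ i, G i` perfect, and let `N` be a
proper normal subgroup of the product. Then either some projection of `N` to a factor `G j`
is proper, or there is a free ultrafilter `μ` on `I` such that the image of `N` in the
ultraproduct `∏ i, G i / μ` is proper. -/
theorem proper_normal_subgroup_detected_by_stalks
    {I : Type*} (G : I → Type*) [∀ i, Group (G i)]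
    (hperf : commutator (∀ i, G i) = ⊤)
    (N : Subgroup (∀ i, G i)) (hnorm : N.Normal) (hN : N ≠ ⊤) :
    (∃ j : I, Subgroup.map (Pi.evalMonoidHom G j) N ≠ ⊤) ∨
    (∃ μ : Ultrafilter I, (∀ i : I, μ ≠ pure i) ∧
      Subgroup.map (QuotientGroup.mk' (ultrafilterKer G μ)) N ≠ ⊤) := by
  classical
  by_contra hcon
  push_neg at hcon
  obtain ⟨h1, h2⟩ := hcon
  -- key : every element agrees with an element of N on a μ-large set, for each ultrafilter μ
  have key : ∀ (z : ∀ i, G i) (μ : Ultrafilter I),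
      ∃ n ∈ N, ∀ᶠ i in (μ : Filter I), n i = z i := by
    intro z μ
    by_cases hp : ∃ j, μ = pure j
    · obtain ⟨j, rfl⟩ := hp
      have hz : z j ∈ Subgroup.map (Pi.evalMonoidHom G j) N := by rw [h1 j]; trivial
      obtain ⟨n, hn, hnj⟩ := hz
      exact ⟨n, hn, Filter.eventually_pure.2 hnj⟩
    · push_neg at hp
      have hz : (QuotientGroup.mk' (ultrafilterKer G μ)) z ∈
          Subgroup.map (QuotientGroup.mk' (ultrafilterKer G μ)) N := by
        rw [h2 μ hp]; trivial
      obtain ⟨n, hn, hnz⟩ := hz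
      refine ⟨n, hn, ?_⟩
      have hk : n⁻¹ * z ∈ ultrafilterKer G μ := by
        rwa [← QuotientGroup.ker_mk' (ultrafilterKer G μ), MonoidHom.mem_ker, map_mul,
          map_inv, inv_mul_eq_one]
      have hk' : ∀ᶠ i in (μ : Filter I), (n⁻¹ * z) i = 1 := hk
      filter_upwards [hk'] with i hi
      have hii : (n i)⁻¹ * z i = 1 := hi
      rwa [inv_mul_eq_one] at hii
  -- every commutator lies in N
  have comm_mem : ∀ x y : ∀ i, G i, ⁅x, y⁆ ∈ N := by
    intro x y
    let ι := ↥N × ↥N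
    let A : ι → Set I := fun p => {i | (p.1 : ∀ i, G i) i = x i ∧ (p.2 : ∀ i, G i) i = y i}
    let U : ι → Set (Ultrafilter I) := fun p => {μ | A p ∈ μ}
    have hopen : ∀ p, IsOpen (U p) := fun p => ultrafilter_isOpen_basic (A p)
    have hcover : (Set.univ : Set (Ultrafilter I)) ⊆ ⋃ p, U p := by
      intro μ _
      obtain ⟨a, ha, hax⟩ := key x μ
      obtain ⟨b, hb, hby⟩ := key y μ
      exact Set.mem_iUnion.2 ⟨(⟨a, ha⟩, ⟨b, hb⟩), (hax.and hby : _)⟩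
    obtain ⟨t, ht⟩ := isCompact_univ.elim_finite_subcover U hopen hcover
    have hchoice : ∀ i : I, ∃ p, p ∈ t ∧ (p.1 : ∀ i, G i) i = x i ∧ (p.2 : ∀ i, G i) i = y i := by
      intro i
      have hm := ht (Set.mem_univ (pure i : Ultrafilter I))
      simp only [Set.mem_iUnion] at hm
      obtain ⟨p, hp, hmem⟩ := hm
      exact ⟨p, hp, hmem⟩
    choose c hct hcx hcy using hchoice
    let m : ι → ∀ i, G i := fun j => fun i => if c i = j then x i else 1
    let f : ι → ∀ i, G i := fun j => ⁅m j, (j.2 : ∀ i, G i)⁆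
    have hEval : ∀ (j : ι) (i : I), f j i = if c i = j then ⁅x i, y i⁆ else 1 := by
      intro j i
      by_cases h : c i = j
      · subst h
        simp only [f, m, commutatorElement_def, Pi.mul_apply, Pi.inv_apply, if_pos rfl,
          hcy i, hcx i, if_true]
      · simp [f, m, commutatorElement_def, h]
    have hcommute : (↑t : Set ι).Pairwise (Function.onFun Commute f) := by
      intro a _ b _ hab
      show f a * f b = f b * f a
      funext i
      simp only [Pi.mul_apply, hEval]
      by_cases h : c i = a
      · have hb : ¬ c i = b := fun hh => hab (h.symm.trans hh)
        rw [if_pos h, if_neg hb, mul_one, one_mul]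
      · rw [if_neg h, one_mul, mul_one]
    have hfac : ∀ j : ι, f j ∈ N := by
      intro j
      have he : f j = (m j * (j.2 : ∀ i, G i) * (m j)⁻¹) * ((j.2 : ∀ i, G i))⁻¹ := by
        show ⁅m j, (j.2 : ∀ i, G i)⁆ = _
        rw [commutatorElement_def]
      rw [he]
      exact N.mul_mem (hnorm.conj_mem _ j.2.2 (m j)) (N.inv_mem j.2.2)
    have hmem : t.noncommProd f hcommute ∈ N :=
      Subgroup.noncommProd_mem N hcommute (fun j _ => hfac j)
    have heq : t.noncommProd f hcommute = ⁅x, y⁆ := by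
      funext i
      rw [show (t.noncommProd f hcommute) i
          = Pi.evalMonoidHom G i (t.noncommProd f hcommute) from rfl,
        Finset.map_noncommProd]
      generalize_proofs hc
      rw [← Finset.mul_noncommProd_erase t (hct i)]
      have hone : ∀ j ∈ t.erase (c i), (Pi.evalMonoidHom G i) (f j) = 1 := by
        intro j hj
        have hne : j ≠ c i := Finset.ne_of_mem_erase hj
        show f j i = 1
        rw [hEval j i, if_neg (fun hh => hne hh.symm)]
      generalize_proofs hc'
      rw [Finset.noncommProd_eq_pow_card _ _ _ 1 hone, one_pow, mul_one]
      show f (c i) i = ⁅x, y⁆ i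
      rw [hEval (c i) i, if_pos rfl]
      simp [commutatorElement_def]
    exact heq ▸ hmem
  have hcomm : commutator (∀ i, G i) ≤ N := by
    rw [commutator, Subgroup.commutator_le]
    intro g _ h _
    exact comm_mem g h
  exact hN (top_le_iff.1 (hperf ▸ hcomm))
end

section
/- In SU(2) with the bi-invariant spherical metric d of diameter π, let a be a non-central element and set θ = ℓ(δ(a)) where δ is the root c ↦ c² on a maximal torus containing a conjugate of a. Then the set C(a)C(a⁻¹) of products of a conjugate of a and a conjugate of a⁻¹ equals the closed metric ball of radius θ around the identity, and consequently every element of SU(2) is a product of at most 2⌈π/θ⌉ conjugates of a and a⁻¹. -/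
/-- The special unitary group `SU(2)`, as a subgroup of the unitary group of `2 × 2`
complex matrices. -/
def SU2 : Subgroup (Matrix.unitaryGroup (Fin 2) ℂ) where
  carrier := {A | ((A : Matrix (Fin 2) (Fin 2) ℂ)).det = 1}
  one_mem' := by simp
  mul_mem' := by
    intro a b ha hb
    simp only [Set.mem_setOf_eq, Submonoid.coe_mul, Matrix.det_mul] at *
    rw [ha, hb, one_mul]
  inv_mem' := by
    intro a ha
    simp only [Set.mem_setOf_eq] at *
    have h : ((a⁻¹ : Matrix.unitaryGroup (Fin 2) ℂ) : Matrix (Fin 2) (Fin 2) ℂ)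
        = star ((a : Matrix.unitaryGroup (Fin 2) ℂ) : Matrix (Fin 2) (Fin 2) ℂ) := rfl
    rw [h, Matrix.star_eq_conjTranspose, Matrix.det_conjTranspose, ha]
    simp

/-- The bi-invariant spherical (angular) metric of diameter `π` on `SU(2)`, identified with
the round unit `3`-sphere: `d(x, y) = arccos (Re (tr (x y⁻¹)) / 2)`. -/
noncomputable def su2dist (x y : SU2) : ℝ :=
  Real.arccos ((Matrix.trace
    (((x * y⁻¹ : SU2) : Matrix.unitaryGroup (Fin 2) ℂ) : Matrix (Fin 2) (Fin 2) ℂ)).re / 2)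

set_option maxHeartbeats 1000000
open Matrix Complex

namespace SU2aux

noncomputable def mat (x : SU2) : Matrix (Fin 2) (Fin 2) ℂ :=
  ((x : Matrix.unitaryGroup (Fin 2) ℂ) : Matrix (Fin 2) (Fin 2) ℂ)

lemma mat_mul (x y : SU2) : mat (x*y) = mat x * mat y := rfl
lemma mat_one : mat 1 = 1 := rfl
lemma mat_inv (x : SU2) : mat x⁻¹ = star (mat x) := rfl
lemma mat_star_mul (x : SU2) : star (mat x) * mat x = 1 := x.1.2.1
lemma mat_mul_star (x : SU2) : mat x * star (mat x) = 1 := x.1.2.2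
lemma mat_det (x : SU2) : (mat x).det = 1 := x.2

lemma mat_injective : Function.Injective mat := by
  intro x y h
  exact Subtype.ext (Subtype.ext h)

/-- Structure of SU2 elements. -/
lemma exists_form (x : SU2) : ∃ α β : ℂ,
    mat x = !![α, -(starRingEnd ℂ) β; β, (starRingEnd ℂ) α] ∧
      α * (starRingEnd ℂ) α + β * (starRingEnd ℂ) β = 1 := by
  set M := mat x with hM
  have hadj : star M = M.adjugate := by
    have h2 : M * M.adjugate = 1 := by rw [Matrix.mul_adjugate, mat_det, one_smul]
    rw [← mul_one (star M), ← h2, ← mul_assoc, mat_star_mul, one_mul]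
  refine ⟨M 0 0, M 1 0, ?_, ?_⟩
  · have h01 : (starRingEnd ℂ) (M 1 0) = - M 0 1 := by
      have := congrFun (congrFun hadj 0) 1
      simpa [Matrix.adjugate_fin_two, Matrix.star_eq_conjTranspose,
        Matrix.conjTranspose_apply] using this
    have h11 : M 1 1 = (starRingEnd ℂ) (M 0 0) := by
      have h := congrFun (congrFun hadj 1) 1
      simp only [Matrix.adjugate_fin_two, Matrix.star_eq_conjTranspose,
        Matrix.conjTranspose_apply, Matrix.of_apply, Matrix.cons_val', Matrix.cons_val_one,
        Matrix.head_cons, Matrix.head_fin_const, Matrix.cons_val_fin_one, Matrix.empty_val', Complex.star_def] at h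
      rw [← h, Complex.conj_conj]
    rw [h01, ← h11, neg_neg]
    exact Matrix.eta_fin_two M
  · have h01 : (starRingEnd ℂ) (M 1 0) = - M 0 1 := by
      have := congrFun (congrFun hadj 0) 1
      simpa [Matrix.adjugate_fin_two, Matrix.star_eq_conjTranspose,
        Matrix.conjTranspose_apply] using this
    have h11 : M 1 1 = (starRingEnd ℂ) (M 0 0) := by
      have h := congrFun (congrFun hadj 1) 1
      simp only [Matrix.adjugate_fin_two, Matrix.star_eq_conjTranspose,
        Matrix.conjTranspose_apply, Matrix.of_apply, Matrix.cons_val', Matrix.cons_val_one,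
        Matrix.head_cons, Matrix.head_fin_const, Matrix.cons_val_fin_one, Matrix.empty_val', Complex.star_def] at h
      rw [← h, Complex.conj_conj]
    have hd : M.det = 1 := mat_det x
    rw [Matrix.det_fin_two] at hd
    rw [h01, ← h11]
    linear_combination hd

noncomputable def dmat (μ : ℂ) : Matrix (Fin 2) (Fin 2) ℂ := !![μ, 0; 0, (starRingEnd ℂ) μ]

lemma dmat_mul (a b : ℂ) : dmat a * dmat b = dmat (a * b) := by
  simp [dmat, Matrix.mul_fin_two]

lemma star_dmat (μ : ℂ) : star (dmat μ) = dmat ((starRingEnd ℂ) μ) := by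
  ext i j
  fin_cases i <;> fin_cases j <;>
    simp [dmat, Matrix.star_eq_conjTranspose, Matrix.conjTranspose_apply]

lemma dmat_mem (μ : ℂ) (h : μ * (starRingEnd ℂ) μ = 1) :
    dmat μ ∈ Matrix.unitaryGroup (Fin 2) ℂ := by
  rw [Matrix.mem_unitaryGroup_iff, star_dmat, Matrix.one_fin_two]
  simp only [dmat, Matrix.mul_fin_two, mul_zero, zero_mul, add_zero, zero_add, h,
    Complex.conj_conj, show (starRingEnd ℂ) μ * μ = 1 by linear_combination h]

noncomputable def dsu2 (μ : ℂ) (h : μ * (starRingEnd ℂ) μ = 1) : SU2 :=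
  ⟨⟨dmat μ, dmat_mem μ h⟩, by
    show (dmat μ).det = 1
    simp [dmat, Matrix.det_fin_two_of, h]⟩

lemma mat_dsu2 (μ : ℂ) (h : μ * (starRingEnd ℂ) μ = 1) : mat (dsu2 μ h) = dmat μ := rfl

lemma unit_pow {μ : ℂ} (h : μ * (starRingEnd ℂ) μ = 1) (n : ℕ) :
    μ ^ n * (starRingEnd ℂ) (μ ^ n) = 1 := by
  rw [map_pow, ← mul_pow, h, one_pow]

lemma dsu2_pow (μ : ℂ) (h : μ * (starRingEnd ℂ) μ = 1) (n : ℕ) :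
    (dsu2 μ h) ^ n = dsu2 (μ ^ n) (unit_pow h n) := by
  apply mat_injective
  induction n with
  | zero =>
    show mat 1 = dmat 1
    rw [mat_one]
    simp [dmat, Matrix.one_fin_two]
  | succ k ih =>
    rw [pow_succ, mat_mul, ih]
    simp only [mat_dsu2]
    rw [dmat_mul, ← pow_succ]

lemma trace_dmat (μ : ℂ) : (dmat μ).trace = μ + (starRingEnd ℂ) μ := by
  simp [dmat, Matrix.trace_fin_two_of]

/-- trace is real, with re = 2 * (x₀₀).re -/
lemma trace_re_le (x : SU2) : -2 ≤ ((mat x).trace).re ∧ ((mat x).trace).re ≤ 2 := by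
  obtain ⟨α, β, hx, h1⟩ := exists_form x
  have htr : (mat x).trace = α + (starRingEnd ℂ) α := by
    rw [hx, Matrix.trace_fin_two_of]
  have h1' : Complex.normSq α + Complex.normSq β = 1 := by
    have := congrArg Complex.re h1
    simpa [Complex.mul_conj] using this
  have hα : Complex.normSq α ≤ 1 := by nlinarith [Complex.normSq_nonneg β]
  have hre : α.re ^ 2 ≤ 1 := by
    have := Complex.normSq_apply α
    nlinarith [sq_nonneg α.im]
  have h2 : ((mat x).trace).re = 2 * α.re := by
    rw [htr, Complex.add_conj]
    simp
  constructor <;> nlinarith [sq_nonneg (α.re - 1), sq_nonneg (α.re + 1)]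


noncomputable def lamC (p : ℝ) : ℂ := ⟨p, Real.sqrt (1 - p^2)⟩

lemma lamC_re (p : ℝ) : (lamC p).re = p := rfl

lemma lamC_unit {p : ℝ} (h1 : -1 ≤ p) (h2 : p ≤ 1) :
    lamC p * (starRingEnd ℂ) (lamC p) = 1 := by
  rw [Complex.mul_conj]
  have hs : Real.sqrt (1 - p^2) * Real.sqrt (1 - p^2) = 1 - p^2 :=
    Real.mul_self_sqrt (by nlinarith)
  have : Complex.normSq (lamC p) = 1 := by
    rw [Complex.normSq_apply]
    show p * p + Real.sqrt (1 - p^2) * Real.sqrt (1 - p^2) = 1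
    rw [hs]; ring
  rw [this]; norm_num

noncomputable def lamOf (x : SU2) : ℂ := lamC ((mat x).trace.re / 2)

lemma lamOf_unit (x : SU2) : lamOf x * (starRingEnd ℂ) (lamOf x) = 1 := by
  obtain ⟨hl, hu⟩ := trace_re_le x
  exact lamC_unit (by linarith) (by linarith)

lemma isConj_lam (x : SU2) : IsConj (dsu2 (lamOf x) (lamOf_unit x)) x := by
  obtain ⟨α, β, hx, h1⟩ := exists_form x
  have htr : (mat x).trace.re / 2 = α.re := by
    rw [hx, Matrix.trace_fin_two_of, Complex.add_conj]
    simp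
  set μ := lamC α.re with hμdef
  have hμOf : lamOf x = μ := by rw [lamOf, htr]
  have h1' : Complex.normSq α + Complex.normSq β = 1 := by
    have := congrArg Complex.re h1
    simpa [Complex.mul_conj] using this
  have hp2 : α.re ^ 2 ≤ 1 := by
    have := Complex.normSq_apply α
    nlinarith [sq_nonneg α.im, Complex.normSq_nonneg β]
  have hμ1 : μ * (starRingEnd ℂ) μ = 1 :=
    lamC_unit (by nlinarith) (by nlinarith)
  have hμ2 : μ + (starRingEnd ℂ) μ = α + (starRingEnd ℂ) α := by
    rw [Complex.add_conj, Complex.add_conj, lamC_re]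
  by_cases hc : β = 0 ∧ α = μ
  · have hm : mat x = dmat μ := by
      rw [hx, hc.1, ← hc.2, dmat]
      simp
    have hxe : dsu2 (lamOf x) (lamOf_unit x) = x := by
      apply mat_injective
      rw [mat_dsu2, hμOf, hm]
    rw [hxe]
  · -- eigenvector construction
    have hI1 : α * ((starRingEnd ℂ) β) - (starRingEnd ℂ) β * (α - μ)
        = (starRingEnd ℂ) β * μ := by ring
    have hI2 : β * ((starRingEnd ℂ) β) + (starRingEnd ℂ) α * (α - μ) = (α - μ) * μ := by
      linear_combination h1 + μ * hμ2 - hμ1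
    have hI3 : α * (-((starRingEnd ℂ) α - (starRingEnd ℂ) μ)) - (starRingEnd ℂ) β * β
        = -((starRingEnd ℂ) α - (starRingEnd ℂ) μ) * (starRingEnd ℂ) μ := by
      linear_combination - h1 - (starRingEnd ℂ) μ * hμ2 + hμ1
    have hI4 : β * (-((starRingEnd ℂ) α - (starRingEnd ℂ) μ)) + (starRingEnd ℂ) α * β
        = β * (starRingEnd ℂ) μ := by ring
    set v1 : ℂ := (starRingEnd ℂ) β with hv1def
    set v2 : ℂ := α - μ with hv2def
    have hvpos : 0 < Complex.normSq v1 + Complex.normSq v2 := by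
      rcases eq_or_ne v1 0 with h | h
      · have h2 : (starRingEnd ℂ) β = 0 := hv1def ▸ h
        have hβ : β = 0 := by
          have h3 := congrArg (starRingEnd ℂ) h2
          rw [Complex.conj_conj, map_zero] at h3
          exact h3
        have hv2ne : v2 ≠ 0 := by
          intro h2
          exact hc ⟨hβ, by rwa [sub_eq_zero] at h2⟩
        have := Complex.normSq_pos.mpr hv2ne
        simp only [h, map_zero]
        linarith
      · have := Complex.normSq_pos.mpr h
        nlinarith [Complex.normSq_nonneg v2]
    set r : ℝ := Real.sqrt (Complex.normSq v1 + Complex.normSq v2) with hrdef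
    have hrpos : 0 < r := Real.sqrt_pos.mpr hvpos
    have hrC : ((r : ℝ) : ℂ) ≠ 0 := by
      simpa using ne_of_gt hrpos
    have hinv : ((r⁻¹ : ℝ) : ℂ) * ((r : ℝ) : ℂ) = 1 := by
      push_cast
      field_simp
    have hv12 : v1 * (starRingEnd ℂ) v1 + v2 * (starRingEnd ℂ) v2 = ((r : ℝ) : ℂ) ^ 2 := by
      rw [Complex.mul_conj, Complex.mul_conj]
      rw [hrdef]
      rw [← Complex.ofReal_pow, Real.sq_sqrt (le_of_lt hvpos)]
      push_cast
      ring
    set s : ℂ := ((r⁻¹ : ℝ) : ℂ) with hsdef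
    have hKs : (starRingEnd ℂ) s = s := Complex.conj_ofReal _
    set w1 : ℂ := v1 * s with hw1def
    set w2 : ℂ := v2 * s with hw2def
    have hw : w1 * (starRingEnd ℂ) w1 + w2 * (starRingEnd ℂ) w2 = 1 := by
      rw [hw1def, hw2def, _root_.map_mul, _root_.map_mul, hKs]
      linear_combination s^2 * hv12 + (s * ((r:ℝ):ℂ) + 1) * hinv
    set G : Matrix (Fin 2) (Fin 2) ℂ :=
      !![w1, -(starRingEnd ℂ) w2; w2, (starRingEnd ℂ) w1] with hGdef
    have hstarG : star G = !![(starRingEnd ℂ) w1, (starRingEnd ℂ) w2; -w2, w1] := by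
      ext i j
      fin_cases i <;> fin_cases j <;>
        simp [hGdef, Matrix.star_eq_conjTranspose, Matrix.conjTranspose_apply]
    have hGmem : G ∈ Matrix.unitaryGroup (Fin 2) ℂ := by
      rw [Matrix.mem_unitaryGroup_iff, hstarG, hGdef, Matrix.mul_fin_two, Matrix.one_fin_two]
      have e11 : w1 * (starRingEnd ℂ) w1 + -(starRingEnd ℂ) w2 * -w2 = 1 := by
        linear_combination hw
      have e12 : w1 * (starRingEnd ℂ) w2 + -(starRingEnd ℂ) w2 * w1 = 0 := by ring
      have e21 : w2 * (starRingEnd ℂ) w1 + (starRingEnd ℂ) w1 * -w2 = 0 := by ring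
      have e22 : w2 * (starRingEnd ℂ) w2 + (starRingEnd ℂ) w1 * w1 = 1 := by
        linear_combination hw
      rw [e11, e12, e21, e22]
    have hGdet : G.det = 1 := by
      rw [hGdef, Matrix.det_fin_two_of]
      linear_combination hw
    set g : SU2 := ⟨⟨G, hGmem⟩, hGdet⟩ with hgdef
    have hmatg : mat g = G := rfl
    have hKw1 : (starRingEnd ℂ) w1 = (starRingEnd ℂ) v1 * s := by
      rw [hw1def, _root_.map_mul, hKs]
    have hKw2 : (starRingEnd ℂ) w2 = (starRingEnd ℂ) v2 * s := by
      rw [hw2def, _root_.map_mul, hKs]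
    have hKv1 : (starRingEnd ℂ) v1 = β := by rw [hv1def]; simp
    have hKv2 : (starRingEnd ℂ) v2 = (starRingEnd ℂ) α - (starRingEnd ℂ) μ := by
      rw [hv2def, map_sub]
    have key : mat x * G = G * dmat μ := by
      rw [hx, hGdef, dmat, Matrix.mul_fin_two, Matrix.mul_fin_two]
      have f11 : α * w1 + -(starRingEnd ℂ) β * w2 = w1 * μ + -(starRingEnd ℂ) w2 * 0 := by
        rw [hw1def, hw2def]
        linear_combination s * hI1
      have f12 : α * -(starRingEnd ℂ) w2 + -(starRingEnd ℂ) β * (starRingEnd ℂ) w1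
          = w1 * 0 + -(starRingEnd ℂ) w2 * (starRingEnd ℂ) μ := by
        rw [hKw1, hKw2, hKv1, hKv2]
        linear_combination s * hI3
      have f21 : β * w1 + (starRingEnd ℂ) α * w2 = w2 * μ + (starRingEnd ℂ) w1 * 0 := by
        rw [hw1def, hw2def]
        linear_combination s * hI2
      have f22 : β * -(starRingEnd ℂ) w2 + (starRingEnd ℂ) α * (starRingEnd ℂ) w1
          = w2 * 0 + (starRingEnd ℂ) w1 * (starRingEnd ℂ) μ := by
        rw [hKw1, hKw2, hKv1, hKv2]
        linear_combination s * hI4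
      rw [f11, f12, f21, f22]
    have key2 : g * dsu2 (lamOf x) (lamOf_unit x) = x * g := by
      apply mat_injective
      rw [mat_mul, mat_mul, mat_dsu2, hmatg, hμOf, ← key]
    rw [isConj_iff]
    exact ⟨g, by rw [key2]; group⟩

lemma trace_eq_of_isConj {x y : SU2} (h : IsConj x y) :
    (mat x).trace = (mat y).trace := by
  obtain ⟨g, hg⟩ := isConj_iff.mp h
  have : mat y = mat g * mat x * star (mat g) := by
    rw [← hg, mat_mul, mat_mul, mat_inv]
  rw [this, Matrix.trace_mul_comm, ← mul_assoc, mat_star_mul, one_mul]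

lemma isConj_of_trace_re {x y : SU2} (h : (mat x).trace.re = (mat y).trace.re) :
    IsConj x y := by
  have hx := isConj_lam x
  have hy := isConj_lam y
  have : dsu2 (lamOf x) (lamOf_unit x) = dsu2 (lamOf y) (lamOf_unit y) := by
    apply mat_injective
    rw [mat_dsu2, mat_dsu2, lamOf, lamOf, h]
  exact (this ▸ hx).symm.trans hy


lemma trace_inv_re (x : SU2) : (mat x⁻¹).trace.re = (mat x).trace.re := by
  rw [mat_inv, Matrix.star_eq_conjTranspose, Matrix.trace_conjTranspose]
  exact Complex.conj_re _

lemma star_form (α β : ℂ) :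
    star !![α, -(starRingEnd ℂ) β; β, (starRingEnd ℂ) α]
      = !![(starRingEnd ℂ) α, (starRingEnd ℂ) β; -β, α] := by
  ext i j
  fin_cases i <;> fin_cases j <;>
    simp [Matrix.star_eq_conjTranspose, Matrix.conjTranspose_apply]

/-- Construct an element of SU2 from the standard parametrization. -/
noncomputable def mkSU2 (α β : ℂ)
    (h : α * (starRingEnd ℂ) α + β * (starRingEnd ℂ) β = 1) : SU2 :=
  ⟨⟨!![α, -(starRingEnd ℂ) β; β, (starRingEnd ℂ) α], by
    rw [Matrix.mem_unitaryGroup_iff, star_form, Matrix.mul_fin_two, Matrix.one_fin_two]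
    have e11 : α * (starRingEnd ℂ) α + -(starRingEnd ℂ) β * -β = 1 := by linear_combination h
    have e12 : α * (starRingEnd ℂ) β + -(starRingEnd ℂ) β * α = 0 := by ring
    have e21 : β * (starRingEnd ℂ) α + (starRingEnd ℂ) α * -β = 0 := by ring
    have e22 : β * (starRingEnd ℂ) β + (starRingEnd ℂ) α * α = 1 := by linear_combination h
    rw [e11, e12, e21, e22]⟩, by
    show Matrix.det _ = 1
    rw [Matrix.det_fin_two_of]
    linear_combination h⟩

lemma mat_mkSU2 (α β : ℂ) (h : α * (starRingEnd ℂ) α + β * (starRingEnd ℂ) β = 1) :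
    mat (mkSU2 α β h) = !![α, -(starRingEnd ℂ) β; β, (starRingEnd ℂ) α] := rfl

/-- The trace of `t · u t u⁻¹` where `t = diag (c, c̄)`. -/
lemma trace_formula (c α β : ℂ) (hc : c * (starRingEnd ℂ) c = 1) :
    (dmat c * (!![α, -(starRingEnd ℂ) β; β, (starRingEnd ℂ) α]
        * (dmat c * star !![α, -(starRingEnd ℂ) β; β, (starRingEnd ℂ) α]))).trace
      = (c^2 + ((starRingEnd ℂ) c)^2) * (α * (starRingEnd ℂ) α)
        + 2 * (β * (starRingEnd ℂ) β) := by
  rw [star_form, dmat, Matrix.mul_fin_two, Matrix.mul_fin_two, Matrix.mul_fin_two,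
    Matrix.trace_fin_two_of]
  linear_combination (2 * β * (starRingEnd ℂ) β) * hc

lemma trace_re_formula (c α β : ℂ) (hc : c * (starRingEnd ℂ) c = 1)
    (h : Complex.normSq α + Complex.normSq β = 1) :
    (dmat c * (!![α, -(starRingEnd ℂ) β; β, (starRingEnd ℂ) α]
        * (dmat c * star !![α, -(starRingEnd ℂ) β; β, (starRingEnd ℂ) α]))).trace.re
      = 2 * (c^2).re * Complex.normSq α + 2 * (1 - Complex.normSq α) := by
  rw [trace_formula c α β hc]
  have h2 : ((starRingEnd ℂ) c)^2 = (starRingEnd ℂ) (c^2) := (map_pow _ _ _).symm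
  rw [h2, Complex.mul_conj, Complex.mul_conj]
  have hβ : Complex.normSq β = 1 - Complex.normSq α := by linarith
  rw [hβ]
  have : c ^ 2 + (starRingEnd ℂ) (c ^ 2) = ((2 * (c^2).re : ℝ) : ℂ) := Complex.add_conj _
  rw [this]
  simp

lemma diagonal_eq_dmat (c : ℂ) :
    Matrix.diagonal ![c, (starRingEnd ℂ) c] = dmat c := by
  ext i j
  fin_cases i <;> fin_cases j <;> simp [Matrix.diagonal, dmat]

end SU2aux

open SU2aux

/-- Let `a ∈ SU(2)` be non-central, conjugate to the diagonal torus element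
`t = diag (c, c̄)`, and let `θ = ℓ(δ(a)) = arccos (Re (c²))` be the angular distance from `1`
to the value of the root `δ : c ↦ c²`. Then `C(a)C(a⁻¹)` is exactly the closed ball of
radius `θ` around the identity for the spherical metric, and consequently every element of
`SU(2)` is a product of at most `2⌈π/θ⌉` conjugates of `a` and `a⁻¹`. -/
theorem su2_conj_class_prod_eq_ball_and_bounded_generation
    (a : SU2) (ha : a ∉ Subgroup.center SU2)
    (c : ℂ) (t : SU2)
    (ht : ((t : Matrix.unitaryGroup (Fin 2) ℂ) : Matrix (Fin 2) (Fin 2) ℂ)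
      = Matrix.diagonal ![c, starRingEnd ℂ c])
    (hconj : IsConj t a)
    (θ : ℝ) (hθ : θ = Real.arccos ((c ^ 2).re)) :
    {x : SU2 | ∃ y z : SU2, IsConj a y ∧ IsConj a⁻¹ z ∧ x = y * z}
      = {x : SU2 | su2dist x 1 ≤ θ} ∧
    ∀ g : SU2, ∃ m : ℕ, m ≤ 2 * ⌈Real.pi / θ⌉₊ ∧
      ∃ u : Fin m → SU2, (∀ i, IsConj a (u i) ∨ IsConj a⁻¹ (u i)) ∧
        (List.ofFn u).prod = g := by
  have htmat : mat t = dmat c := by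
    rw [show mat t = Matrix.diagonal ![c, starRingEnd ℂ c] from ht, diagonal_eq_dmat]
  have hc1 : c * (starRingEnd ℂ) c = 1 := by
    have hd := mat_det t
    rw [htmat, dmat, Matrix.det_fin_two_of] at hd
    linear_combination hd
  have hnc : Complex.normSq c = 1 := by
    have h := hc1
    rw [Complex.mul_conj] at h
    exact_mod_cast h
  have hq2 : Complex.normSq (c ^ 2) = 1 := by
    rw [sq, Complex.normSq_mul, hnc, one_mul]
  set q : ℝ := (c ^ 2).re with hqdef
  have hqsq : q ^ 2 + (c ^ 2).im ^ 2 = 1 := by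
    have := Complex.normSq_apply (c ^ 2)
    nlinarith [hq2]
  have hqle : q ≤ 1 := by nlinarith [sq_nonneg (c ^ 2).im, sq_nonneg (q - 1)]
  have hqm1 : -1 ≤ q := by nlinarith [sq_nonneg (c ^ 2).im, sq_nonneg (q + 1)]
  have hqlt : q < 1 := by
    rcases lt_or_eq_of_le hqle with h | h
    · exact h
    exfalso
    have him : (c ^ 2).im = 0 := by nlinarith
    have hc2 : c ^ 2 = 1 := by
      rw [Complex.ext_iff]
      constructor
      · simpa using h
      · simpa using him
    have hKc : (starRingEnd ℂ) c = c := by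
      linear_combination c * hc1 - (starRingEnd ℂ) c * hc2
    have htc : t ∈ Subgroup.center SU2 := by
      rw [Subgroup.mem_center_iff]
      intro g
      apply mat_injective
      rw [mat_mul, mat_mul, htmat]
      obtain ⟨ga, gb, hg, _⟩ := exists_form g
      rw [hg, dmat, hKc, Matrix.mul_fin_two, Matrix.mul_fin_two]
      ext i j
      fin_cases i <;> fin_cases j <;> simp <;> ring
    have hat : a = t := by
      obtain ⟨g, hg⟩ := isConj_iff.mp hconj
      rw [← hg, Subgroup.mem_center_iff.mp htc g, mul_assoc, mul_inv_cancel, mul_one]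
    exact ha (hat ▸ htc)
  have hθpos : 0 < θ := by rw [hθ]; exact Real.arccos_pos.mpr hqlt
  have hθcos : Real.cos θ = q := by rw [hθ]; exact Real.cos_arccos hqm1 hqle
  have hθpi : θ ≤ Real.pi := by rw [hθ]; exact Real.arccos_le_pi q
  have hdist : ∀ x : SU2, su2dist x 1 = Real.arccos ((mat x).trace.re / 2) := by
    intro x
    unfold su2dist
    rw [inv_one, mul_one]
    rfl
  have harcle : ∀ p : ℝ, q ≤ p → Real.arccos p ≤ θ := by
    intro p hp
    rw [hθ, Real.arccos_eq_pi_div_two_sub_arcsin, Real.arccos_eq_pi_div_two_sub_arcsin]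
    have := Real.monotone_arcsin hp
    linarith
  have hform' : ∀ u : SU2, ∃ α β : ℂ,
      mat u = !![α, -(starRingEnd ℂ) β; β, (starRingEnd ℂ) α] ∧
        Complex.normSq α + Complex.normSq β = 1 := by
    intro u
    obtain ⟨α, β, hu, h1⟩ := exists_form u
    refine ⟨α, β, hu, ?_⟩
    have := congrArg Complex.re h1
    simpa [Complex.mul_conj] using this
  have hprod_tr : ∀ u : SU2, ∃ sν : ℝ, 0 ≤ sν ∧ sν ≤ 1 ∧
      (mat (t * (u * t * u⁻¹))).trace.re = 2 * q * sν + 2 * (1 - sν) := by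
    intro u
    obtain ⟨α, β, hu, h1⟩ := hform' u
    refine ⟨Complex.normSq α, Complex.normSq_nonneg α,
      by nlinarith [Complex.normSq_nonneg β], ?_⟩
    rw [mat_mul, mat_mul, mat_mul, mat_inv, htmat, hu, mul_assoc, mul_assoc]
    rw [trace_re_formula c α β hc1 h1, ← hqdef]
    ring
  -- the set equality
  have hset : {x : SU2 | ∃ y z : SU2, IsConj a y ∧ IsConj a⁻¹ z ∧ x = y * z}
      = {x : SU2 | su2dist x 1 ≤ θ} := by
    ext x
    simp only [Set.mem_setOf_eq]
    constructor
    · rintro ⟨y, z, hy, hz, rfl⟩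
      have hty : IsConj t y := hconj.trans hy
      have htz : IsConj t z := by
        apply isConj_of_trace_re
        have h1 := trace_eq_of_isConj hz
        have h2 := trace_eq_of_isConj hconj
        have h3 := trace_inv_re a
        rw [← congrArg Complex.re h1, h3, ← congrArg Complex.re h2]
      obtain ⟨g, hg⟩ := isConj_iff.mp hty
      obtain ⟨k, hk⟩ := isConj_iff.mp htz
      have hyz : y * z = g * (t * ((g⁻¹ * k) * t * (g⁻¹ * k)⁻¹)) * g⁻¹ := by
        rw [← hg, ← hk]
        group
      obtain ⟨sν, hs0, hs1, hstr⟩ := hprod_tr (g⁻¹ * k)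
      have htr : (mat (y * z)).trace.re = 2 * q * sν + 2 * (1 - sν) := by
        rw [hyz, ← hstr]
        exact congrArg Complex.re (trace_eq_of_isConj (isConj_iff.mpr ⟨g, rfl⟩)).symm
      rw [hdist, htr]
      have : q ≤ (2 * q * sν + 2 * (1 - sν)) / 2 := by nlinarith
      exact harcle _ this
    · intro hx
      set p : ℝ := (mat x).trace.re / 2 with hpdef
      have hple : p ≤ 1 := by
        obtain ⟨h1, h2⟩ := trace_re_le x
        rw [hpdef]; linarith
      have hqp : q ≤ p := by
        rw [hdist] at hx
        have h1 := Real.cos_le_cos_of_nonneg_of_le_pi (Real.arccos_nonneg p) hθpi hx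
        rw [hθcos] at h1
        have h2 : Real.cos (Real.arccos p) = p := by
          obtain ⟨hl, hu⟩ := trace_re_le x
          exact Real.cos_arccos (by rw [hpdef]; linarith) hple
        linarith
      set sν : ℝ := (1 - p) / (1 - q) with hsdef
      have h1q : 0 < 1 - q := by linarith
      have hs0 : 0 ≤ sν := div_nonneg (by linarith) (le_of_lt h1q)
      have hs1 : sν ≤ 1 := by
        rw [hsdef, div_le_one h1q]
        linarith
      have hsq : (1 - q) * sν = 1 - p := by
        rw [hsdef]
        field_simp
      -- build the rotation u0
      have hαβ : ((Real.sqrt sν : ℝ) : ℂ) * (starRingEnd ℂ) ((Real.sqrt sν : ℝ) : ℂ)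
          + ((Real.sqrt (1 - sν) : ℝ) : ℂ) * (starRingEnd ℂ) ((Real.sqrt (1 - sν) : ℝ) : ℂ)
            = 1 := by
        rw [Complex.conj_ofReal, Complex.conj_ofReal, ← Complex.ofReal_mul,
          ← Complex.ofReal_mul, ← Complex.ofReal_add,
          Real.mul_self_sqrt hs0, Real.mul_self_sqrt (by linarith)]
        norm_num
      set u0 : SU2 := mkSU2 _ _ hαβ with hu0def
      have hnsα : Complex.normSq ((Real.sqrt sν : ℝ) : ℂ) = sν := by
        rw [Complex.normSq_ofReal, Real.mul_self_sqrt hs0]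
      have hstr' : (mat (t * (u0 * t * u0⁻¹))).trace.re = 2 * q * sν + 2 * (1 - sν) := by
        rw [mat_mul, mat_mul, mat_mul, mat_inv, htmat, hu0def, mat_mkSU2, mul_assoc,
          mul_assoc]
        rw [trace_re_formula c _ _ hc1 (by
          have := congrArg Complex.re hαβ
          simpa [Complex.mul_conj] using this)]
        rw [hnsα, ← hqdef]
        ring
      have hwx : IsConj (t * (u0 * t * u0⁻¹)) x := by
        apply isConj_of_trace_re
        rw [hstr']
        have : 2 * q * sν + 2 * (1 - sν) = 2 * p := by
          nlinarith [hsq]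
        rw [this, hpdef]
        ring
      obtain ⟨g, hg⟩ := isConj_iff.mp hwx
      refine ⟨g * t * g⁻¹, g * (u0 * t * u0⁻¹) * g⁻¹, ?_, ?_, ?_⟩
      · exact hconj.symm.trans (isConj_iff.mpr ⟨g, rfl⟩)
      · apply isConj_of_trace_re
        have h3 := trace_inv_re a
        have h2 := congrArg Complex.re (trace_eq_of_isConj hconj)
        have h4 := congrArg Complex.re
          (trace_eq_of_isConj (isConj_iff.mpr ⟨u0, rfl⟩ : IsConj t (u0 * t * u0⁻¹)))
        have h5 := congrArg Complex.re
          (trace_eq_of_isConj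
            (isConj_iff.mpr ⟨g, rfl⟩ : IsConj (u0 * t * u0⁻¹) (g * (u0 * t * u0⁻¹) * g⁻¹)))
        rw [h3, ← h2, h4, h5]
      · rw [← hg]
        group
  refine ⟨hset, ?_⟩
  intro g
  have hg := isConj_lam g
  obtain ⟨h0, hh0⟩ := isConj_iff.mp hg
  set p' : ℝ := (mat g).trace.re / 2 with hp'def
  have hp'm1 : -1 ≤ p' := by
    obtain ⟨h1, h2⟩ := trace_re_le g
    rw [hp'def]; linarith
  have hp'le : p' ≤ 1 := by
    obtain ⟨h1, h2⟩ := trace_re_le g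
    rw [hp'def]; linarith
  set φ : ℝ := Real.arccos p' with hφdef
  set n : ℕ := ⌈Real.pi / θ⌉₊ with hndef
  have hn1 : 1 ≤ n := Nat.one_le_ceil_iff.mpr (div_pos Real.pi_pos hθpos)
  have hnR : (0:ℝ) < (n:ℝ) := by
    have : (1:ℝ) ≤ (n:ℝ) := by exact_mod_cast hn1
    linarith
  have hφ0 : 0 ≤ φ := Real.arccos_nonneg p'
  have hφπ : φ ≤ Real.pi := Real.arccos_le_pi p'
  have hφn : φ / n ≤ θ := by
    have h1 : Real.pi / θ ≤ (n:ℝ) := Nat.le_ceil _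
    rw [div_le_iff₀ hθpos] at h1
    rw [div_le_iff₀ hnR]
    calc φ ≤ Real.pi := hφπ
    _ ≤ (n:ℝ) * θ := h1
    _ = θ * (n:ℝ) := mul_comm _ _
  have hφn0 : 0 ≤ φ / n := div_nonneg hφ0 (le_of_lt hnR)
  have hφnπ : φ / n ≤ Real.pi := by
    calc φ / n ≤ θ := hφn
    _ ≤ Real.pi := hθpi
  set ν : ℂ := Complex.exp ((φ / n : ℝ) * Complex.I) with hνdef
  have hνform : ν = ((Real.cos (φ / n) : ℝ) : ℂ) + ((Real.sin (φ / n) : ℝ) : ℂ) * Complex.I := by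
    rw [hνdef, Complex.exp_mul_I, Complex.ofReal_cos, Complex.ofReal_sin]
  have hνre : ν.re = Real.cos (φ / n) := by
    rw [hνform]
    simp [← Complex.ofReal_div, Complex.cos_ofReal_re, Complex.sin_ofReal_im,
      Complex.cos_ofReal_im, Complex.sin_ofReal_re]
  have hνim : ν.im = Real.sin (φ / n) := by
    rw [hνform]
    simp [← Complex.ofReal_div, Complex.cos_ofReal_re, Complex.sin_ofReal_im,
      Complex.cos_ofReal_im, Complex.sin_ofReal_re]
  have hν1 : ν * (starRingEnd ℂ) ν = 1 := by
    rw [Complex.mul_conj]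
    have : Complex.normSq ν = 1 := by
      rw [Complex.normSq_apply, hνre, hνim]
      have := Real.sin_sq_add_cos_sq (φ / n)
      nlinarith
    rw [this]
    norm_num
  have hνn : ν ^ n = lamOf g := by
    rw [hνdef, ← Complex.exp_nat_mul]
    have hne : ((n:ℂ)) ≠ 0 := by
      exact_mod_cast ne_of_gt hnR
    have h2 : (n:ℂ) * (((φ / n : ℝ) : ℂ) * Complex.I) = (φ:ℝ) * Complex.I := by
      push_cast
      field_simp
    rw [h2, Complex.exp_mul_I, ← Complex.ofReal_cos, ← Complex.ofReal_sin]
    have hcos : Real.cos φ = p' := Real.cos_arccos hp'm1 hp'le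
    have hsin : Real.sin φ = Real.sqrt (1 - p' ^ 2) := Real.sin_arccos p'
    rw [hcos, hsin]
    show _ = lamC ((mat g).trace.re / 2)
    rw [← hp'def]
    apply Complex.ext <;> simp [lamC]
  have hfac : su2dist (h0 * dsu2 ν hν1 * h0⁻¹) 1 ≤ θ := by
    rw [hdist]
    have h3 : (mat (h0 * dsu2 ν hν1 * h0⁻¹)).trace.re = (mat (dsu2 ν hν1)).trace.re :=
      (congrArg Complex.re (trace_eq_of_isConj (isConj_iff.mpr ⟨h0, rfl⟩))).symm
    have h4 : (mat (dsu2 ν hν1)).trace = ν + (starRingEnd ℂ) ν := by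
      rw [mat_dsu2, trace_dmat]
    have h5 : (mat (dsu2 ν hν1)).trace.re = 2 * Real.cos (φ / n) := by
      rw [h4, Complex.add_conj, Complex.ofReal_re, hνre]
    rw [h3, h5]
    have h6 : 2 * Real.cos (φ / n) / 2 = Real.cos (φ / n) := by ring
    rw [h6, Real.arccos_cos hφn0 hφnπ]
    exact hφn
  have hk : (h0 * dsu2 ν hν1 * h0⁻¹)
      ∈ {x : SU2 | ∃ y z : SU2, IsConj a y ∧ IsConj a⁻¹ z ∧ x = y * z} := by
    rw [hset]
    exact hfac
  obtain ⟨y, z, hy, hz, hyz⟩ := hk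
  have hgn : (y * z) ^ n = g := by
    rw [← hyz, conj_pow, dsu2_pow]
    have h7 : dsu2 (ν ^ n) (unit_pow hν1 n) = dsu2 (lamOf g) (lamOf_unit g) := by
      apply mat_injective
      rw [mat_dsu2, mat_dsu2, hνn]
    rw [h7, hh0]
  set l : List SU2 := (List.replicate n [y, z]).flatten with hldef
  have hlen : l.length = 2 * n := by
    rw [hldef, List.length_flatten, List.map_replicate, List.sum_replicate]
    simp [mul_comm]
  have hprod : l.prod = g := by
    rw [hldef, List.prod_flatten, List.map_replicate]
    have : List.prod [y, z] = y * z := by simp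
    rw [this, List.prod_replicate, hgn]
  refine ⟨l.length, le_of_eq hlen, l.get, ?_, ?_⟩
  · intro i
    have hmem : l.get i ∈ l := l.get_mem _
    have hmem2 : l.get i ∈ (List.replicate n [y, z]).flatten := by
      rw [← hldef]; exact hmem
    rw [List.mem_flatten] at hmem2
    obtain ⟨L, hL, hmemL⟩ := hmem2
    rw [List.mem_replicate] at hL
    rw [hL.2] at hmemL
    simp only [List.mem_cons, List.mem_singleton, List.not_mem_nil, or_false] at hmemL
    rcases hmemL with h | h
    · exact Or.inl (h ▸ hy)
    · exact Or.inr (h ▸ hz)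
  · rw [List.ofFn_get]
    exact hprod
end
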